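/- Let S be the real vector space of families d = (d^l_{ijst})_{l,i,j,s,t ∈ {1,2}} with d^l_{ijst} = d^l_{jist} and d^l_{ijst} = d^l_{ijts}, equipped with its natural (Euclidean/product) topology. Then the set of d ∈ S for which the only matrix b = (b^k_s)_{k,s ∈ {1,2}} satisfying the second-order compatibility system associated to d is b = 0, is open and dense in S. -/

import Mathlib

open Finset

/-- The space of families `d l i j s t` of real coefficients (indices in `Fin 2`,
where `0` and `1` represent the paper's indices `1` and `2`), symmetric in the lower
indices `i, j` and in the lower indices `s, t`. -/
def SymCoeffs2 : Type :=
  {d : Fin 2 → Fin 2 → Fin 2 → Fin 2 → Fin 2 → ℝ //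
    (∀ l i j s t, d l i j s t = d l j i s t) ∧ (∀ l i j s t, d l i j s t = d l i j t s)}

instance : TopologicalSpace SymCoeffs2 :=
  instTopologicalSpaceSubtype

/-- The set of coefficient families `d` for which the only matrix `b` satisfying the
second-order compatibility system associated to `d` is `b = 0`. -/
def NondegenerateSet2 : Set SymCoeffs2 :=
  {d | ∀ b : Fin 2 → Fin 2 → ℝ,
    (∀ j l t : Fin 2,
      ∑ k : Fin 2,
        ((d.1 l k j 1 t - d.1 l 1 j k t) * b k 0 + (d.1 l 0 j k t - d.1 l k j 0 t) * b k 1 +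
         (d.1 l 0 j k 1 - d.1 l 1 j k 0) * b k t + (d.1 k 1 j 0 t - d.1 k 0 j 1 t) * b l k +
         (d.1 l 0 k 1 t - d.1 l 1 k 0 t) * b k j) = 0) →
    b = 0}

/-! ### Auxiliary development -/

open Matrix Polynomial

/-- Raw coefficient families. -/
abbrev RawCoeffs2 : Type := Fin 2 → Fin 2 → Fin 2 → Fin 2 → Fin 2 → ℝ

/-- The matrix of the second-order compatibility system: rows indexed by `(j, l, t)`,
columns by `(a, s)` (the coefficient of `b a s`). -/
def Amat (d : RawCoeffs2) : Matrix (Fin 2 × Fin 2 × Fin 2) (Fin 2 × Fin 2) ℝ :=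
  fun r c =>
    (if c.2 = 0 then d r.2.1 c.1 r.1 1 r.2.2 - d r.2.1 1 r.1 c.1 r.2.2
     else d r.2.1 0 r.1 c.1 r.2.2 - d r.2.1 c.1 r.1 0 r.2.2) +
    (if c.2 = r.2.2 then d r.2.1 0 r.1 c.1 1 - d r.2.1 1 r.1 c.1 0 else 0) +
    (if c.1 = r.2.1 then d c.2 1 r.1 0 r.2.2 - d c.2 0 r.1 1 r.2.2 else 0) +
    (if c.2 = r.1 then d r.2.1 0 c.1 1 r.2.2 - d r.2.1 1 c.1 0 r.2.2 else 0)

lemma key' (d : RawCoeffs2) (v : Fin 2 × Fin 2 → ℝ) (j l t : Fin 2) :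
    (∑ k : Fin 2,
        ((d l k j 1 t - d l 1 j k t) * v (k, 0) + (d l 0 j k t - d l k j 0 t) * v (k, 1) +
         (d l 0 j k 1 - d l 1 j k 0) * v (k, t) + (d k 1 j 0 t - d k 0 j 1 t) * v (l, k) +
         (d l 0 k 1 t - d l 1 k 0 t) * v (k, j))) =
    (Amat d).mulVec v (j, l, t) := by
  fin_cases j <;> fin_cases l <;> fin_cases t <;>
    simp [Amat, Matrix.mulVec, dotProduct, Fin.sum_univ_two,
      Fintype.sum_prod_type] <;> ring

lemma key2 (d : RawCoeffs2) (b : Fin 2 → Fin 2 → ℝ) (j l t : Fin 2) :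
    (∑ k : Fin 2,
        ((d l k j 1 t - d l 1 j k t) * b k 0 + (d l 0 j k t - d l k j 0 t) * b k 1 +
         (d l 0 j k 1 - d l 1 j k 0) * b k t + (d k 1 j 0 t - d k 0 j 1 t) * b l k +
         (d l 0 k 1 t - d l 1 k 0 t) * b k j)) =
    (Amat d).mulVec (fun p => b p.1 p.2) (j, l, t) := by
  fin_cases j <;> fin_cases l <;> fin_cases t <;>
    simp [Amat, Matrix.mulVec, dotProduct, Fin.sum_univ_two,
      Fintype.sum_prod_type] <;> ring

lemma Amat_add_smul (x y : RawCoeffs2) (c : ℝ) (r : Fin 2 × Fin 2 × Fin 2)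
    (p : Fin 2 × Fin 2) : Amat (x + c • y) r p = Amat x r p + c * Amat y r p := by
  simp only [Amat, Pi.add_apply, Pi.smul_apply, smul_eq_mul]
  split_ifs <;> ring

lemma Amat_smul (c : ℝ) (x : RawCoeffs2) : Amat (c • x) = c • Amat x := by
  ext r p
  simp only [Amat, Pi.smul_apply, smul_eq_mul, Matrix.smul_apply]
  split_ifs <;> ring

/-- Gram determinant of the system matrix. -/
noncomputable def Pdet (d : RawCoeffs2) : ℝ := ((Amat d)ᵀ * Amat d).det

lemma inj_iff (d : RawCoeffs2) :
    (∀ v : Fin 2 × Fin 2 → ℝ, (Amat d).mulVec v = 0 → v = 0) ↔ Pdet d ≠ 0 := by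
  constructor
  · intro h h0
    obtain ⟨v, hv, hGv⟩ := (Matrix.exists_mulVec_eq_zero_iff).2 h0
    apply hv
    apply h v
    have h2 : ((Amat d).mulVec v) ⬝ᵥ ((Amat d).mulVec v) = 0 := by
      have h1 : v ⬝ᵥ ((Amat d)ᵀ * Amat d).mulVec v = 0 := by
        rw [hGv, dotProduct_zero]
      rwa [← Matrix.mulVec_mulVec, Matrix.dotProduct_mulVec,
        Matrix.vecMul_transpose] at h1
    exact dotProduct_self_eq_zero.1 h2
  · intro hP v hv
    by_contra hne
    apply hP
    rw [show Pdet d = ((Amat d)ᵀ * Amat d).det from rfl,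
      ← Matrix.exists_mulVec_eq_zero_iff]
    exact ⟨v, hne, by rw [← Matrix.mulVec_mulVec, hv, Matrix.mulVec_zero]⟩

lemma nondeg_eq : NondegenerateSet2 = {d : SymCoeffs2 | Pdet d.1 ≠ 0} := by
  ext d
  simp only [NondegenerateSet2, Set.mem_setOf_eq, ← inj_iff]
  constructor
  · intro h v hv
    have hb : (fun a s => v (a, s)) = 0 := by
      apply h
      intro j l t
      beta_reduce
      rw [key' d.1 v j l t, hv]
      rfl
    funext p
    have := congrFun (congrFun hb p.1) p.2
    simpa using this
  · intro h b hb
    have hv : (Amat d.1).mulVec (fun p => b p.1 p.2) = 0 := by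
      funext r
      obtain ⟨j, l, t⟩ := r
      rw [← key2 d.1 b j l t]
      simpa using hb j l t
    have := h _ hv
    funext a s
    exact congrFun this (a, s)

/-- An explicit nondegenerate coefficient family. -/
def efun : RawCoeffs2 := fun l i j s t =>
  if l = 0 then
    (if s.val + t.val = 1 then
      (if i.val + j.val = 0 then 1 else if i.val + j.val = 1 then -1 else 0) else 0)
  else (if i.val + j.val = 2 ∧ s.val + t.val = 2 then 1 else 0)

lemma efun_symm1 (l i j s t : Fin 2) : efun l i j s t = efun l j i s t := by
  simp [efun, Nat.add_comm i.val j.val]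

lemma efun_symm2 (l i j s t : Fin 2) : efun l i j s t = efun l i j t s := by
  simp [efun, Nat.add_comm s.val t.val]

set_option maxRecDepth 8000 in
lemma efun_nondeg : Pdet efun ≠ 0 := by
  rw [← inj_iff]
  intro v hv
  have h000 := congrFun hv (0, 0, 0)
  have h001 := congrFun hv (0, 0, 1)
  have h010 := congrFun hv (0, 1, 0)
  have h100 := congrFun hv (1, 0, 0)
  have h110 := congrFun hv (1, 1, 0)
  simp only [Matrix.mulVec, dotProduct, Fintype.sum_prod_type, Fin.sum_univ_two,
    Amat, efun] at h000 h001 h010 h100 h110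
  norm_num at h000 h001 h010 h100 h110
  funext p
  obtain ⟨a, s⟩ := p
  fin_cases a <;> fin_cases s <;> simp <;> linarith

lemma Pdet_smul (c : ℝ) (x : RawCoeffs2) : Pdet (c • x) = c ^ 8 * Pdet x := by
  show ((Amat (c • x))ᵀ * Amat (c • x)).det = c ^ 8 * ((Amat x)ᵀ * Amat x).det
  rw [Amat_smul, Matrix.transpose_smul, Matrix.smul_mul, Matrix.mul_smul, smul_smul,
    Matrix.det_smul]
  simp only [Fintype.card_prod, Fintype.card_fin]
  ring

/-- The matrix of polynomials interpolating between `Amat efun` and `Amat d`. -/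
noncomputable def Bmat (d : RawCoeffs2) :
    Matrix (Fin 2 × Fin 2 × Fin 2) (Fin 2 × Fin 2) (Polynomial ℝ) :=
  fun r c => C (Amat efun r c) + C (Amat d r c) * X

/-- The polynomial `s ↦ Pdet (efun + s • d)`. -/
noncomputable def Qpoly (d : RawCoeffs2) : Polynomial ℝ := ((Bmat d)ᵀ * Bmat d).det

lemma Bmat_map (d : RawCoeffs2) (s : ℝ) :
    (Bmat d).map (Polynomial.evalRingHom s) = Amat (efun + s • d) := by
  ext r c
  simp only [Bmat, Matrix.map_apply, coe_evalRingHom, eval_add, eval_C, eval_mul, eval_X,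
    Amat_add_smul]
  ring

lemma Qpoly_eval (d : RawCoeffs2) (s : ℝ) :
    (Qpoly d).eval s = Pdet (efun + s • d) := by
  show (Polynomial.evalRingHom s) (Qpoly d) = ((Amat (efun + s • d))ᵀ * Amat (efun + s • d)).det
  rw [Qpoly, RingHom.map_det, RingHom.mapMatrix_apply, Matrix.map_mul,
    Matrix.transpose_map, Bmat_map]

lemma Qpoly_ne_zero (d : RawCoeffs2) : Qpoly d ≠ 0 := by
  intro h
  have h0 : (Qpoly d).eval 0 = Pdet efun := by
    rw [Qpoly_eval]
    norm_num
  rw [h] at h0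
  exact efun_nondeg (by simpa using h0.symm)

set_option synthInstance.maxHeartbeats 200000 in
/-- The set of coefficient families `d` whose associated second-order compatibility
system forces `b = 0` is open and dense. -/
theorem nondegenerateSet2_isOpen_and_dense :
    IsOpen NondegenerateSet2 ∧ Dense NondegenerateSet2 := by
  rw [nondeg_eq]
  have hcont : Continuous fun d : SymCoeffs2 => Pdet d.1 := by
    have hcoord : ∀ l i j s t : Fin 2, Continuous fun d : SymCoeffs2 => d.1 l i j s t := by
      intro l i j s t
      exact (continuous_apply t).comp <| (continuous_apply s).comp <|
        (continuous_apply j).comp <| (continuous_apply i).comp <|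
        (continuous_apply l).comp continuous_subtype_val
    have hA : Continuous fun d : SymCoeffs2 => Amat d.1 := by
      apply continuous_matrix
      intro r c
      simp only [Amat]
      split_ifs <;>
        apply_rules [Continuous.add, Continuous.sub, Continuous.neg, continuous_const, hcoord]
    exact (hA.matrix_transpose.matrix_mul hA).matrix_det
  constructor
  · exact isOpen_compl_singleton.preimage hcont
  · intro x
    rw [mem_closure_iff_nhds]
    intro U hU
    -- the line `t ↦ x + t • efun` in `SymCoeffs2`
    set f : ℝ → SymCoeffs2 := fun t =>
      ⟨x.1 + t • efun, by
        constructor <;> intro l i j s u <;>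
          simp only [Pi.add_apply, Pi.smul_apply, smul_eq_mul]
        · rw [x.2.1 l i j s u, efun_symm1]
        · rw [x.2.2 l i j s u, efun_symm2]⟩ with hf
    have hfc : Continuous f := by
      apply Continuous.subtype_mk
      fun_prop
    have hf0 : f 0 = x := by
      apply Subtype.ext
      simp [hf]
    have hUf : f ⁻¹' U ∈ nhds (0 : ℝ) := by
      apply hfc.continuousAt.preimage_mem_nhds
      rwa [hf0]
    obtain ⟨δ, hδ, hball⟩ := Metric.mem_nhds_iff.1 hUf
    -- choose a large non-root `s` of `Qpoly x.1`
    have hfin := Polynomial.finite_setOf_isRoot (Qpoly_ne_zero x.1)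
    have : ¬ Set.Ioi (max δ⁻¹ 1) ⊆ {y | (Qpoly x.1).IsRoot y} := by
      intro hsub
      exact Set.Ioi_infinite _ (hfin.subset hsub)
    obtain ⟨s, hs, hroot⟩ := Set.not_subset.1 this
    have hs1 : (1 : ℝ) < s := lt_of_le_of_lt (le_max_right _ _) hs
    have hspos : 0 < s := lt_trans zero_lt_one hs1
    have hsne : s ≠ 0 := ne_of_gt hspos
    -- `f s⁻¹` is nondegenerate
    have hPval : Pdet (efun + s • x.1) ≠ 0 := by
      intro h
      apply hroot
      show (Qpoly x.1).IsRoot s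
      rw [Polynomial.IsRoot, Qpoly_eval, h]
    have hrep : x.1 + s⁻¹ • efun = s⁻¹ • (efun + s • x.1) := by
      rw [smul_add, smul_smul, inv_mul_cancel₀ hsne, one_smul, add_comm]
    have hmem : f s⁻¹ ∈ {d : SymCoeffs2 | Pdet d.1 ≠ 0} := by
      show Pdet (x.1 + s⁻¹ • efun) ≠ 0
      rw [hrep, Pdet_smul]
      exact mul_ne_zero (pow_ne_zero _ (inv_ne_zero hsne)) hPval
    have hdist : f s⁻¹ ∈ U := by
      apply hball
      rw [Metric.mem_ball, Real.dist_eq, sub_zero, abs_of_pos (inv_pos.2 hspos)]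
      calc s⁻¹ < (δ⁻¹)⁻¹ := by
            apply inv_strictAnti₀ (inv_pos.2 hδ)
            exact lt_of_le_of_lt (le_max_left _ _) hs
        _ = δ := inv_inv δ
    exact ⟨f s⁻¹, hdist, hmem⟩
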